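/- Let I ⊆ ℝ^{1×ℓ}⟨x,x*⟩ be a homogeneous left module (one generated by homogeneous polynomials), and let L ∈ ℝ^{ν×ν}⟨x,x*⟩ be a monic linear pencil. Then the following are equivalent: (i) I is real; (ii) I is L-real; (iii) I is strongly L-real. -/

import Mathlib

open scoped BigOperators
open Matrix

/-- The `2g` free letters: `Sum.inl i` is `xᵢ`, `Sum.inr i` is `xᵢ*`. -/
abbrev Lttr (g : ℕ) := Fin g ⊕ Fin g

/-- The free real algebra `ℝ⟨x,x*⟩` on `2g` letters. -/
abbrev FreePoly (g : ℕ) := FreeAlgebra ℝ (Lttr g)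

noncomputable def xvar {g : ℕ} (i : Fin g) : FreePoly g := FreeAlgebra.ι ℝ (Sum.inl i)

noncomputable def xstar {g : ℕ} (i : Fin g) : FreePoly g := FreeAlgebra.ι ℝ (Sum.inr i)

/-- The involution `*` on `ℝ⟨x,x*⟩`: linear, reverses products, swaps `xᵢ` and `xᵢ*`. -/
noncomputable def pstar {g : ℕ} (p : FreePoly g) : FreePoly g :=
  MulOpposite.unop
    (FreeAlgebra.lift ℝ
      (fun l : Lttr g => MulOpposite.op (FreeAlgebra.ι ℝ (Sum.swap l))) p)

/-- Evaluation of a noncommutative polynomial at a `g`-tuple of real `n × n` matrices,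
sending `xᵢ` to `X i` and `xᵢ*` to `(X i)ᵀ`. -/
noncomputable def evalP {g n : ℕ} (X : Fin g → Matrix (Fin n) (Fin n) ℝ) :
    FreePoly g →ₐ[ℝ] Matrix (Fin n) (Fin n) ℝ :=
  FreeAlgebra.lift ℝ (Sum.elim X (fun i => (X i)ᵀ))

/-- Entrywise (block) evaluation of a `ν × ℓ` matrix polynomial. -/
noncomputable def evalM {g n ν ℓ : ℕ} (X : Fin g → Matrix (Fin n) (Fin n) ℝ)
    (p : Matrix (Fin ν) (Fin ℓ) (FreePoly g)) :
    Matrix (Fin ν × Fin n) (Fin ℓ × Fin n) ℝ :=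
  fun ir js => evalP X (p ir.1 js.1) ir.2 js.2

/-- Evaluation of a row vector of polynomials (an element of `ℝ^{1×ℓ}⟨x,x*⟩`). -/
noncomputable def evalRow {g n ℓ : ℕ} (X : Fin g → Matrix (Fin n) (Fin n) ℝ)
    (p : Fin ℓ → FreePoly g) : Matrix (Fin n) (Fin ℓ × Fin n) ℝ :=
  fun r js => evalP X (p js.1) r js.2

/-- The involution on matrices of polynomials: entrywise `*` combined with transpose. -/
noncomputable def starM {g a b : ℕ} (p : Matrix (Fin a) (Fin b) (FreePoly g)) :
    Matrix (Fin b) (Fin a) (FreePoly g) :=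
  fun i j => pstar (p j i)

/-- For a row vector `p ∈ ℝ^{1×ℓ}⟨x,x*⟩`, the `ℓ × ℓ` matrix `p*p`. -/
noncomputable def sqForm {g ℓ : ℕ} (p : Fin ℓ → FreePoly g) :
    Matrix (Fin ℓ) (Fin ℓ) (FreePoly g) :=
  fun a b => pstar (p a) * p b

/-- For `q ∈ ℝ^{ν×ℓ}⟨x,x*⟩`, the `ℓ × ℓ` matrix `q*Lq`. -/
noncomputable def quadForm {g ν ℓ : ℕ} (L : Matrix (Fin ν) (Fin ν) (FreePoly g))
    (q : Matrix (Fin ν) (Fin ℓ) (FreePoly g)) : Matrix (Fin ℓ) (Fin ℓ) (FreePoly g) :=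
  starM q * L * q

/-- For row vectors `r, ι ∈ ℝ^{1×ℓ}⟨x,x*⟩`, the `ℓ × ℓ` matrix `r*ι`. -/
noncomputable def outerStar {g ℓ : ℕ} (r ι : Fin ℓ → FreePoly g) :
    Matrix (Fin ℓ) (Fin ℓ) (FreePoly g) :=
  fun a b => pstar (r a) * ι b

/-- `m ∈ ℝ^{a×1}I`: every row of the matrix polynomial `m` lies in the left module `I`. -/
def rowsInM {g a ℓ : ℕ} (I : Submodule (FreePoly g) (Fin ℓ → FreePoly g))
    (m : Matrix (Fin a) (Fin ℓ) (FreePoly g)) : Prop :=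
  ∀ i, m i ∈ I

/-- Every row of the matrix polynomial `m` lies in the real subspace `C`. -/
def rowsInR {g a ℓ : ℕ} (C : Submodule ℝ (Fin ℓ → FreePoly g))
    (m : Matrix (Fin a) (Fin ℓ) (FreePoly g)) : Prop :=
  ∀ i, m i ∈ C

/-- The set `ℝ^{ℓ×1}I + I*ℝ^{1×ℓ}` of `ℓ × ℓ` matrix polynomials. -/
def modPlusStar {g ℓ : ℕ} (I : Submodule (FreePoly g) (Fin ℓ → FreePoly g)) :
    Set (Matrix (Fin ℓ) (Fin ℓ) (FreePoly g)) :=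
  { m | ∃ u v : Matrix (Fin ℓ) (Fin ℓ) (FreePoly g),
      rowsInM I u ∧ rowsInM I v ∧ m = u + starM v }

/-- `I` is an `L`-real left module. -/
def IsLReal {g ν ℓ : ℕ} (L : Matrix (Fin ν) (Fin ν) (FreePoly g))
    (I : Submodule (FreePoly g) (Fin ℓ → FreePoly g)) : Prop :=
  ∀ (a b : ℕ) (p : Fin a → (Fin ℓ → FreePoly g))
    (q : Fin b → Matrix (Fin ν) (Fin ℓ) (FreePoly g)),
    ((∑ i, sqForm (p i)) + ∑ j, quadForm L (q j)) ∈ modPlusStar I →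
    (∀ i, p i ∈ I) ∧ ∀ j, rowsInM I (L * q j)

/-- `I` is a strongly `L`-real left module. -/
def IsLRealStrong {g ν ℓ : ℕ} (L : Matrix (Fin ν) (Fin ν) (FreePoly g))
    (I : Submodule (FreePoly g) (Fin ℓ → FreePoly g)) : Prop :=
  ∀ (a b : ℕ) (p : Fin a → (Fin ℓ → FreePoly g))
    (q : Fin b → Matrix (Fin ν) (Fin ℓ) (FreePoly g)),
    ((∑ i, sqForm (p i)) + ∑ j, quadForm L (q j)) ∈ modPlusStar I →
    (∀ i, p i ∈ I) ∧ ∀ j, rowsInM I (q j)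

/-- `I` is a real left module. -/
def IsRealMod {g ℓ : ℕ} (I : Submodule (FreePoly g) (Fin ℓ → FreePoly g)) : Prop :=
  ∀ (a : ℕ) (p : Fin a → (Fin ℓ → FreePoly g)),
    (∑ i, sqForm (p i)) ∈ modPlusStar I → ∀ i, p i ∈ I

/-- The `L`-real radical of `I`: the smallest `L`-real left module containing `I`. -/
noncomputable def Lrad {g ν ℓ : ℕ} (L : Matrix (Fin ν) (Fin ν) (FreePoly g))
    (I : Submodule (FreePoly g) (Fin ℓ → FreePoly g)) :
    Submodule (FreePoly g) (Fin ℓ → FreePoly g) :=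
  sInf { J | I ≤ J ∧ IsLReal L J }

/-- The strong `L`-real radical of `I`. -/
noncomputable def LradStrong {g ν ℓ : ℕ} (L : Matrix (Fin ν) (Fin ν) (FreePoly g))
    (I : Submodule (FreePoly g) (Fin ℓ → FreePoly g)) :
    Submodule (FreePoly g) (Fin ℓ → FreePoly g) :=
  sInf { J | I ≤ J ∧ IsLRealStrong L J }

/-- The real radical of `I`: the smallest real left module containing `I`. -/
noncomputable def realRad {g ℓ : ℕ} (I : Submodule (FreePoly g) (Fin ℓ → FreePoly g)) :
    Submodule (FreePoly g) (Fin ℓ → FreePoly g) :=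
  sInf { J | I ≤ J ∧ IsRealMod J }

/-- The word `w` as a product of letters in `ℝ⟨x,x*⟩`. -/
noncomputable def fword {g : ℕ} (w : List (Lttr g)) : FreePoly g :=
  (w.map (FreeAlgebra.ι ℝ)).prod

/-- The subspace of polynomials of degree at most `d`. -/
noncomputable def degLE (g d : ℕ) : Submodule ℝ (FreePoly g) :=
  Submodule.span ℝ { p | ∃ w : List (Lttr g), w.length ≤ d ∧ p = fword w }

/-- The monomial `eᵢ ⊗ w` in `ℝ^{1×ℓ}⟨x,x*⟩`. -/
noncomputable def monoRow {g ℓ : ℕ} (i : Fin ℓ) (w : List (Lttr g)) : Fin ℓ → FreePoly g :=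
  fun j => if j = i then fword w else 0

/-- `C` is a right chip space: it is spanned by a set of monomials and is closed
under taking middle chips. -/
def IsChipSpace {g ℓ : ℕ} (C : Submodule ℝ (Fin ℓ → FreePoly g)) : Prop :=
  (∃ S : Set (Fin ℓ × List (Lttr g)),
      C = Submodule.span ℝ ((fun m => monoRow m.1 m.2) '' S)) ∧
  ∀ (i : Fin ℓ) (w1 w2 w3 : List (Lttr g)),
    monoRow i (w1 ++ w2 ++ w3) ∈ C → monoRow i w3 ∈ C → monoRow i (w2 ++ w3) ∈ C

/-- `C` is full: it contains every right chip of each of its monomials. -/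
def IsFullChip {g ℓ : ℕ} (C : Submodule ℝ (Fin ℓ → FreePoly g)) : Prop :=
  ∀ (i : Fin ℓ) (w1 w2 : List (Lttr g)), monoRow i (w1 ++ w2) ∈ C → monoRow i w2 ∈ C

/-- The subspace `ℝ⟨x,x*⟩_d C`: the span of all products `q • c` with `deg q ≤ d`, `c ∈ C`. -/
noncomputable def degC {g ℓ : ℕ} (d : ℕ) (C : Submodule ℝ (Fin ℓ → FreePoly g)) :
    Submodule ℝ (Fin ℓ → FreePoly g) :=
  Submodule.span ℝ { v | ∃ q ∈ degLE g d, ∃ c ∈ C, v = fun j => q * c j }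

/-- The subspace `C*ℝ⟨x,x*⟩₁C` of `ℓ × ℓ` matrix polynomials. -/
noncomputable def sandC {g ℓ : ℕ} (C : Submodule ℝ (Fin ℓ → FreePoly g)) :
    Submodule ℝ (Matrix (Fin ℓ) (Fin ℓ) (FreePoly g)) :=
  Submodule.span ℝ
    { m | ∃ a ∈ C, ∃ b ∈ C, ∃ q ∈ degLE g 1,
        m = fun u v => pstar (a u) * q * b v }

/-- `I` is an `(L,C)`-real left module. -/
def IsLCReal {g ν ℓ : ℕ} (L : Matrix (Fin ν) (Fin ν) (FreePoly g))
    (C : Submodule ℝ (Fin ℓ → FreePoly g))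
    (I : Submodule (FreePoly g) (Fin ℓ → FreePoly g)) : Prop :=
  ∀ (a b : ℕ) (p : Fin a → (Fin ℓ → FreePoly g))
    (q : Fin b → Matrix (Fin ν) (Fin ℓ) (FreePoly g)),
    (∀ i, p i ∈ C) → (∀ j, rowsInR C (q j)) →
    ((∑ i, sqForm (p i)) + ∑ j, quadForm L (q j)) ∈ modPlusStar I →
    (∀ i, p i ∈ I) ∧ ∀ j, rowsInM I (L * q j)

/-- `I` is a strongly `(L,C)`-real left module. -/
def IsLCRealStrong {g ν ℓ : ℕ} (L : Matrix (Fin ν) (Fin ν) (FreePoly g))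
    (C : Submodule ℝ (Fin ℓ → FreePoly g))
    (I : Submodule (FreePoly g) (Fin ℓ → FreePoly g)) : Prop :=
  ∀ (a b : ℕ) (p : Fin a → (Fin ℓ → FreePoly g))
    (q : Fin b → Matrix (Fin ν) (Fin ℓ) (FreePoly g)),
    (∀ i, p i ∈ C) → (∀ j, rowsInR C (q j)) →
    ((∑ i, sqForm (p i)) + ∑ j, quadForm L (q j)) ∈ modPlusStar I →
    (∀ i, p i ∈ I) ∧ ∀ j, rowsInM I (q j)

/-- The `(L,C)`-real radical of `I`. -/
noncomputable def LCrad {g ν ℓ : ℕ} (L : Matrix (Fin ν) (Fin ν) (FreePoly g))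
    (C : Submodule ℝ (Fin ℓ → FreePoly g))
    (I : Submodule (FreePoly g) (Fin ℓ → FreePoly g)) :
    Submodule (FreePoly g) (Fin ℓ → FreePoly g) :=
  sInf { J | I ≤ J ∧ IsLCReal L C J }

/-- The strong `(L,C)`-real radical of `I`. -/
noncomputable def LCradStrong {g ν ℓ : ℕ} (L : Matrix (Fin ν) (Fin ν) (FreePoly g))
    (C : Submodule ℝ (Fin ℓ → FreePoly g))
    (I : Submodule (FreePoly g) (Fin ℓ → FreePoly g)) :
    Submodule (FreePoly g) (Fin ℓ → FreePoly g) :=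
  sInf { J | I ≤ J ∧ IsLCRealStrong L C J }

/-- The constant term of a noncommutative polynomial. -/
noncomputable def constTerm (g : ℕ) : FreePoly g →ₐ[ℝ] ℝ :=
  FreeAlgebra.lift ℝ (fun _ : Lttr g => (0 : ℝ))

/-- `L` is a linear pencil: symmetric, with entries of degree at most `1`. -/
def IsPencil {g ν : ℕ} (L : Matrix (Fin ν) (Fin ν) (FreePoly g)) : Prop :=
  starM L = L ∧ ∀ i j, L i j ∈ degLE g 1

/-- `L` is monic: its constant term is the identity matrix. -/
def IsMonic {g ν : ℕ} (L : Matrix (Fin ν) (Fin ν) (FreePoly g)) : Prop :=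
  ∀ i j, constTerm g (L i j) = if i = j then 1 else 0

/-- A real matrix viewed as a constant matrix polynomial. -/
noncomputable def constM {g a b : ℕ} (A : Matrix (Fin a) (Fin b) ℝ) :
    Matrix (Fin a) (Fin b) (FreePoly g) :=
  A.map (algebraMap ℝ (FreePoly g))

/-- `(X, v) ∈ V(I)`: every element of `I` kills `v` at `X`. -/
def inV {g ℓ n : ℕ} (I : Submodule (FreePoly g) (Fin ℓ → FreePoly g))
    (X : Fin g → Matrix (Fin n) (Fin n) ℝ) (v : Fin ℓ × Fin n → ℝ) : Prop :=
  ∀ p ∈ I, (evalRow X p).mulVec v = 0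

/-- The subspace of homogeneous row vectors of degree `d`. -/
noncomputable def homogRow (g ℓ d : ℕ) : Submodule ℝ (Fin ℓ → FreePoly g) :=
  Submodule.span ℝ { v | ∃ (i : Fin ℓ) (w : List (Lttr g)), w.length = d ∧ v = monoRow i w }

/-- `I` is a homogeneous left module: generated by homogeneous polynomials. -/
def IsHomogeneousMod {g ℓ : ℕ} (I : Submodule (FreePoly g) (Fin ℓ → FreePoly g)) : Prop :=
  ∃ S : Set (Fin ℓ → FreePoly g),
    (∀ s ∈ S, ∃ d, s ∈ homogRow g ℓ d) ∧ I = Submodule.span (FreePoly g) S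

section Aux
variable {g : ℕ}

lemma pstar_add (x y : FreePoly g) : pstar (x + y) = pstar x + pstar y := by
  simp [pstar, map_add]

lemma pstar_smul (c : ℝ) (x : FreePoly g) : pstar (c • x) = c • pstar x := by
  simp [pstar, _root_.map_smul]

lemma pstar_mul (x y : FreePoly g) : pstar (x * y) = pstar y * pstar x := by
  simp [pstar, _root_.map_mul]

lemma pstar_one : pstar (1 : FreePoly g) = 1 := by simp [pstar]

lemma pstar_zero : pstar (0 : FreePoly g) = 0 := by simp [pstar]

lemma pstar_ι (l : Lttr g) : pstar (FreeAlgebra.ι ℝ l) = FreeAlgebra.ι ℝ (Sum.swap l) := by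
  simp [pstar]

lemma pstar_algebraMap (c : ℝ) :
    pstar (algebraMap ℝ (FreePoly g) c) = algebraMap ℝ (FreePoly g) c := by
  simp [pstar]

/-- `pstar` as a linear map. -/
noncomputable def pstarL (g : ℕ) : FreePoly g →ₗ[ℝ] FreePoly g where
  toFun := pstar
  map_add' := pstar_add
  map_smul' := pstar_smul

lemma pstar_sum {ι : Type*} (s : Finset ι) (f : ι → FreePoly g) :
    pstar (∑ i ∈ s, f i) = ∑ i ∈ s, pstar (f i) :=
  map_sum (pstarL g) f s

lemma fword_nil : fword ([] : List (Lttr g)) = 1 := by simp [fword]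

lemma fword_cons (l : Lttr g) (w : List (Lttr g)) :
    fword (l :: w) = FreeAlgebra.ι ℝ l * fword w := by simp [fword]

lemma fword_append (w1 w2 : List (Lttr g)) :
    fword (w1 ++ w2) = fword w1 * fword w2 := by simp [fword]

lemma pstar_fword (w : List (Lttr g)) :
    pstar (fword w) = fword ((w.map Sum.swap).reverse) := by
  induction w with
  | nil => simp [fword_nil, pstar_one]
  | cons l w ih =>
      rw [fword_cons, pstar_mul, ih, pstar_ι]
      simp [fword_append, fword_cons, fword_nil]

/-- Shorthand for the monoid-algebra equivalence. -/
noncomputable def EA (g : ℕ) : FreePoly g ≃ₐ[ℝ] MonoidAlgebra ℝ (FreeMonoid (Lttr g)) :=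
  FreeAlgebra.equivMonoidAlgebraFreeMonoid

lemma EA_ι (l : Lttr g) :
    EA g (FreeAlgebra.ι ℝ l) = MonoidAlgebra.single (FreeMonoid.of l) 1 := by
  simp [EA, FreeAlgebra.equivMonoidAlgebraFreeMonoid, MonoidAlgebra.of_apply]

lemma EA_fword (w : List (Lttr g)) :
    EA g (fword w) = MonoidAlgebra.single (FreeMonoid.ofList w) 1 := by
  induction w with
  | nil =>
      rw [fword_nil, _root_.map_one, FreeMonoid.ofList_nil]
      rfl
  | cons l w ih =>
      rw [fword_cons, _root_.map_mul, ih, EA_ι, MonoidAlgebra.single_mul_single,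
        one_mul, FreeMonoid.ofList_cons]

lemma EA_symm_single (w : FreeMonoid (Lttr g)) (c : ℝ) :
    (EA g).symm (MonoidAlgebra.single w c) = c • fword (FreeMonoid.toList w) := by
  have : MonoidAlgebra.single w c
      = c • MonoidAlgebra.single (FreeMonoid.ofList (FreeMonoid.toList w)) (1 : ℝ) := by
    rw [FreeMonoid.ofList_toList, MonoidAlgebra.smul_single', mul_one]
  rw [this, _root_.map_smul, ← EA_fword, AlgEquiv.symm_apply_apply]

/-- Every polynomial is a finite linear combination of words. -/
lemma repr_eq (x : FreePoly g) :
    x = ∑ w ∈ (EA g x).coeff.support, (EA g x).coeff w • fword (FreeMonoid.toList w) := by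
  have h1 : ((EA g x).coeff.sum fun w c => MonoidAlgebra.single w c) = EA g x :=
    MonoidAlgebra.sum_coeff_single _
  have h2 : x = (EA g).symm ((EA g x).coeff.sum fun w c => MonoidAlgebra.single w c) := by
    rw [h1, AlgEquiv.symm_apply_apply]
  conv_lhs => rw [h2]
  rw [Finsupp.sum, map_sum]
  exact Finset.sum_congr rfl fun w _ => EA_symm_single w _

end Aux
section Comp
variable {g : ℕ}

lemma pstar_pstar (x : FreePoly g) : pstar (pstar x) = x := by
  conv_rhs => rw [repr_eq x]
  conv_lhs => rw [repr_eq x]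
  rw [pstar_sum, pstar_sum]
  refine Finset.sum_congr rfl fun w _ => ?_
  rw [pstar_smul, pstar_smul, pstar_fword, pstar_fword]
  congr 1
  simp [List.map_reverse, List.map_map, Function.comp_def]

/-- The scaling endomorphism `x ↦ x(t·)`. -/
noncomputable def sig (g : ℕ) (t : ℝ) : FreePoly g →ₐ[ℝ] FreePoly g :=
  FreeAlgebra.lift ℝ (fun l => t • FreeAlgebra.ι ℝ l)

lemma sig_ι (t : ℝ) (l : Lttr g) :
    sig g t (FreeAlgebra.ι ℝ l) = t • FreeAlgebra.ι ℝ l := by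
  simp [sig]

lemma sig_fword (t : ℝ) (w : List (Lttr g)) :
    sig g t (fword w) = t ^ w.length • fword w := by
  induction w with
  | nil => simp [fword_nil]
  | cons l w ih =>
      rw [fword_cons, _root_.map_mul, ih, sig_ι, smul_mul_smul_comm,
        List.length_cons, pow_succ']

lemma sig_pstar (t : ℝ) (x : FreePoly g) :
    sig g t (pstar x) = pstar (sig g t x) := by
  conv_lhs => rw [repr_eq x]
  conv_rhs => rw [repr_eq x]
  rw [pstar_sum, map_sum, map_sum, pstar_sum]
  refine Finset.sum_congr rfl fun w _ => ?_
  rw [pstar_smul, _root_.map_smul, _root_.map_smul, pstar_smul, pstar_fword, sig_fword,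
    sig_fword, pstar_smul, pstar_fword]
  rw [List.length_reverse, List.length_map]

/-- The degree-`d` homogeneous component. -/
noncomputable def projP (g : ℕ) (d : ℕ) (x : FreePoly g) : FreePoly g :=
  (EA g).symm (MonoidAlgebra.ofCoeff (((EA g) x).coeff.filter fun w => (FreeMonoid.toList w).length = d))

lemma projP_add (d : ℕ) (x y : FreePoly g) :
    projP g d (x + y) = projP g d x + projP g d y := by
  unfold projP
  rw [_root_.map_add, MonoidAlgebra.coeff_add, Finsupp.filter_add, MonoidAlgebra.ofCoeff_add, _root_.map_add]

lemma projP_smul (d : ℕ) (c : ℝ) (x : FreePoly g) :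
    projP g d (c • x) = c • projP g d x := by
  unfold projP
  rw [_root_.map_smul, MonoidAlgebra.coeff_smul, Finsupp.filter_smul, MonoidAlgebra.ofCoeff_smul, _root_.map_smul]

/-- `projP` as a linear map. -/
noncomputable def projL (g d : ℕ) : FreePoly g →ₗ[ℝ] FreePoly g where
  toFun := projP g d
  map_add' := projP_add d
  map_smul' := projP_smul d

lemma projP_fword (d : ℕ) (w : List (Lttr g)) :
    projP g d (fword w) = if w.length = d then fword w else 0 := by
  unfold projP
  rw [EA_fword, MonoidAlgebra.coeff_single]
  by_cases h : w.length = d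
  · rw [if_pos h, Finsupp.filter_single_of_pos (fun w => (FreeMonoid.toList w).length = d)
      (show (FreeMonoid.toList (FreeMonoid.ofList w)).length = d from h),
      MonoidAlgebra.ofCoeff_single, EA_symm_single, one_smul]
    rfl
  · rw [Finsupp.filter_single_of_neg (fun w => (FreeMonoid.toList w).length = d)
      (show ¬(FreeMonoid.toList (FreeMonoid.ofList w)).length = d from h),
      if_neg h, MonoidAlgebra.ofCoeff_zero, _root_.map_zero]

/-- A bound beyond which all homogeneous components vanish. -/
noncomputable def projBound (x : FreePoly g) : ℕ :=
  (((EA g) x).coeff.support.sup fun w => (FreeMonoid.toList w).length) + 1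

lemma projP_eq_zero {x : FreePoly g} {d : ℕ} (h : projBound x ≤ d) :
    projP g d x = 0 := by
  unfold projP
  have : (((EA g) x).coeff.filter fun w => (FreeMonoid.toList w).length = d) = 0 := by
    rw [Finsupp.filter_eq_zero_iff]
    intro w hw
    by_contra hne
    have hmem : w ∈ ((EA g) x).coeff.support := Finsupp.mem_support_iff.2 hne
    have hle : (FreeMonoid.toList w).length ≤
        (((EA g) x).coeff.support.sup fun w => (FreeMonoid.toList w).length) :=
      Finset.le_sup hmem
    have h2 : (((EA g) x).coeff.support.sup fun w => (FreeMonoid.toList w).length) + 1 ≤ d := h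
    omega
  rw [this, MonoidAlgebra.ofCoeff_zero, _root_.map_zero]

lemma projP_repr (d : ℕ) (x : FreePoly g) :
    projP g d x = ∑ w ∈ (EA g x).coeff.support,
      (if (FreeMonoid.toList w).length = d then (EA g x).coeff w else 0) • fword (FreeMonoid.toList w) := by
  conv_lhs => rw [repr_eq x]
  rw [show projP g d = ⇑(projL g d) from rfl, map_sum]
  refine Finset.sum_congr rfl fun w _ => ?_
  show projP g d _ = _
  rw [projP_smul, projP_fword]
  split <;> simp

lemma sum_smul_projP (x : FreePoly g) (f : ℕ → ℝ) {M : ℕ} (hM : projBound x ≤ M) :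
    ∑ d ∈ Finset.range M, f d • projP g d x
      = ∑ w ∈ (EA g x).coeff.support,
          (f (FreeMonoid.toList w).length * (EA g x).coeff w) • fword (FreeMonoid.toList w) := by
  have hlen : ∀ w ∈ (EA g x).coeff.support, (FreeMonoid.toList w).length ∈ Finset.range M := by
    intro w hw
    have h3 : (FreeMonoid.toList w).length ≤
        (((EA g) x).coeff.support.sup fun w => (FreeMonoid.toList w).length) :=
      Finset.le_sup hw
    have h2 : (((EA g) x).coeff.support.sup fun w => (FreeMonoid.toList w).length) + 1 ≤ M := hM
    simp only [Finset.mem_range]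
    omega
  calc ∑ d ∈ Finset.range M, f d • projP g d x
      = ∑ d ∈ Finset.range M, ∑ w ∈ (EA g x).coeff.support,
          (if (FreeMonoid.toList w).length = d then f d * (EA g x).coeff w else 0)
            • fword (FreeMonoid.toList w) := by
        refine Finset.sum_congr rfl fun d _ => ?_
        rw [projP_repr, Finset.smul_sum]
        refine Finset.sum_congr rfl fun w _ => ?_
        rw [smul_smul]
        split <;> simp
    _ = ∑ w ∈ (EA g x).coeff.support, ∑ d ∈ Finset.range M,
          (if (FreeMonoid.toList w).length = d then f d * (EA g x).coeff w else 0)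
            • fword (FreeMonoid.toList w) := Finset.sum_comm
    _ = _ := by
        refine Finset.sum_congr rfl fun w hw => ?_
        rw [← Finset.sum_smul]
        congr 1
        rw [Finset.sum_ite_eq (Finset.range M) ((FreeMonoid.toList w).length)
          (fun d => f d * (EA g x).coeff w), if_pos (hlen w hw)]

lemma sum_projP {x : FreePoly g} {N : ℕ} (h : ∀ d, N ≤ d → projP g d x = 0) :
    ∑ d ∈ Finset.range N, projP g d x = x := by
  set M := max N (projBound x) with hM
  have hbase : ∑ d ∈ Finset.range M, projP g d x = x := by
    have h1 : ∑ d ∈ Finset.range M, (1 : ℝ) • projP g d x = x := by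
      rw [sum_smul_projP x (fun _ => (1 : ℝ)) (le_max_right _ _)]
      conv_rhs => rw [repr_eq x]
      simp
    simpa using h1
  conv_rhs => rw [← hbase]
  refine Finset.sum_subset (Finset.range_subset_range.2 (le_max_left _ _)) fun d _ hd => ?_
  exact h d (by simpa using hd)

lemma sig_eq_sum {x : FreePoly g} {N : ℕ} (h : ∀ d, N ≤ d → projP g d x = 0) (t : ℝ) :
    sig g t x = ∑ d ∈ Finset.range N, t ^ d • projP g d x := by
  set M := max N (projBound x) with hM
  have hbase : ∑ d ∈ Finset.range M, t ^ d • projP g d x = sig g t x := by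
    rw [sum_smul_projP x (fun d => t ^ d) (M := M) (le_max_right _ _)]
    conv_rhs => rw [repr_eq x]
    rw [map_sum]
    refine Finset.sum_congr rfl fun w _ => ?_
    rw [_root_.map_smul, sig_fword, smul_smul, mul_comm]
  rw [← hbase]
  refine (Finset.sum_subset (Finset.range_subset_range.2 (le_max_left _ _)) fun d _ hd => ?_).symm
  rw [h d (by simpa using hd), smul_zero]

end Comp
section MatrixAux
variable {g ℓ ν : ℕ}

lemma starM_add {a b : ℕ} (A B : Matrix (Fin a) (Fin b) (FreePoly g)) :
    starM (A + B) = starM A + starM B := by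
  funext i j; exact pstar_add _ _

lemma starM_smul {a b : ℕ} (c : ℝ) (A : Matrix (Fin a) (Fin b) (FreePoly g)) :
    starM (c • A) = c • starM A := by
  funext i j; exact pstar_smul _ _

lemma starM_zero {a b : ℕ} : starM (0 : Matrix (Fin a) (Fin b) (FreePoly g)) = 0 := by
  funext i j; exact pstar_zero

lemma starM_sum {a b : ℕ} {κ : Type*} (s : Finset κ)
    (f : κ → Matrix (Fin a) (Fin b) (FreePoly g)) :
    starM (∑ k ∈ s, f k) = ∑ k ∈ s, starM (f k) := by
  classical
  induction s using Finset.induction with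
  | empty => simp [starM_zero]
  | insert _ _ h ih => rw [Finset.sum_insert h, Finset.sum_insert h, starM_add, ih]

lemma starM_starM {a b : ℕ} (A : Matrix (Fin a) (Fin b) (FreePoly g)) :
    starM (starM A) = A := by
  funext i j; exact pstar_pstar _

lemma starM_mul {a b c : ℕ} (A : Matrix (Fin a) (Fin b) (FreePoly g))
    (B : Matrix (Fin b) (Fin c) (FreePoly g)) :
    starM (A * B) = starM B * starM A := by
  funext i j
  show pstar ((A * B) j i) = _
  rw [Matrix.mul_apply, pstar_sum]
  rw [Matrix.mul_apply]
  refine Finset.sum_congr rfl fun k _ => ?_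
  exact pstar_mul _ _

variable {I : Submodule (FreePoly g) (Fin ℓ → FreePoly g)}

lemma rowsInM_zero {a : ℕ} : rowsInM I (0 : Matrix (Fin a) (Fin ℓ) (FreePoly g)) := by
  intro i
  show (0 : Fin ℓ → FreePoly g) ∈ I
  exact I.zero_mem

lemma rowsInM_add {a : ℕ} {A B : Matrix (Fin a) (Fin ℓ) (FreePoly g)}
    (hA : rowsInM I A) (hB : rowsInM I B) : rowsInM I (A + B) := fun i =>
  I.add_mem (hA i) (hB i)

lemma rowsInM_smul {a : ℕ} (c : ℝ) {A : Matrix (Fin a) (Fin ℓ) (FreePoly g)}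
    (hA : rowsInM I A) : rowsInM I (c • A) := fun i =>
  I.smul_of_tower_mem c (hA i)

lemma rowsInM_sum {a : ℕ} {κ : Type*} (s : Finset κ)
    {f : κ → Matrix (Fin a) (Fin ℓ) (FreePoly g)} (hf : ∀ k ∈ s, rowsInM I (f k)) :
    rowsInM I (∑ k ∈ s, f k) := by
  classical
  induction s using Finset.induction with
  | empty => simpa using rowsInM_zero
  | insert _ _ h ih =>
      rw [Finset.sum_insert h]
      exact rowsInM_add (hf _ (Finset.mem_insert_self _ _))
        (ih fun k hk => hf k (Finset.mem_insert_of_mem hk))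

lemma rowsInM_mul {a b : ℕ} (A : Matrix (Fin a) (Fin b) (FreePoly g))
    {m : Matrix (Fin b) (Fin ℓ) (FreePoly g)} (hm : rowsInM I m) :
    rowsInM I (A * m) := by
  intro i
  have : (A * m) i = ∑ k, A i k • m k := by
    funext j
    rw [Matrix.mul_apply, Finset.sum_apply]
    rfl
  rw [this]
  exact Submodule.sum_mem _ fun k _ => I.smul_mem _ (hm k)

lemma rowsInM_outerStar {r ι' : Fin ℓ → FreePoly g} (h : ι' ∈ I) :
    rowsInM I (outerStar r ι') := by
  intro u
  have : outerStar r ι' u = pstar (r u) • ι' := funext fun v => rfl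
  rw [this]
  exact I.smul_mem _ h

lemma starM_outerStar (r s : Fin ℓ → FreePoly g) :
    starM (outerStar r s) = outerStar s r := by
  funext u v
  show pstar (pstar (r v) * s u) = pstar (s u) * r v
  rw [pstar_mul, pstar_pstar]

/-- `modPlusStar I` as an `ℝ`-submodule. -/
noncomputable def Wmod (I : Submodule (FreePoly g) (Fin ℓ → FreePoly g)) :
    Submodule ℝ (Matrix (Fin ℓ) (Fin ℓ) (FreePoly g)) where
  carrier := modPlusStar I
  add_mem' := by
    rintro x y ⟨u1, v1, hu1, hv1, rfl⟩ ⟨u2, v2, hu2, hv2, rfl⟩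
    refine ⟨u1 + u2, v1 + v2, rowsInM_add hu1 hu2, rowsInM_add hv1 hv2, ?_⟩
    rw [starM_add]; abel
  zero_mem' := ⟨0, 0, rowsInM_zero, rowsInM_zero, by rw [starM_zero, add_zero]⟩
  smul_mem' := by
    rintro c x ⟨u, v, hu, hv, rfl⟩
    exact ⟨c • u, c • v, rowsInM_smul c hu, rowsInM_smul c hv, by
      rw [starM_smul, smul_add]⟩

lemma wmem_left {u : Matrix (Fin ℓ) (Fin ℓ) (FreePoly g)} (hu : rowsInM I u) :
    u ∈ Wmod I :=
  ⟨u, 0, hu, rowsInM_zero, by rw [starM_zero, add_zero]⟩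

lemma wmem_right {v : Matrix (Fin ℓ) (Fin ℓ) (FreePoly g)} (hv : rowsInM I v) :
    starM v ∈ Wmod I :=
  ⟨0, v, rowsInM_zero, hv, by rw [zero_add]⟩

end MatrixAux
section Extraction

lemma coeff_mem {V : Type*} [AddCommGroup V] [Module ℝ V] (W : Submodule ℝ V)
    (N : ℕ) (m : ℕ → V) (h : ∀ t : ℝ, ∑ k ∈ Finset.range N, t ^ k • m k ∈ W) :
    ∀ k ∈ Finset.range N, m k ∈ W := by
  intro k hk
  set y : ℕ → V ⧸ W := fun j => W.mkQ (m j) with hy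
  have hq : ∀ t : ℝ, ∑ j ∈ Finset.range N, t ^ j • y j = 0 := by
    intro t
    have : ∑ j ∈ Finset.range N, t ^ j • y j = W.mkQ (∑ j ∈ Finset.range N, t ^ j • m j) := by
      rw [map_sum]
      exact Finset.sum_congr rfl fun j _ => (LinearMap.map_smul _ _ _).symm
    rw [this, Submodule.mkQ_apply, Submodule.Quotient.mk_eq_zero]
    exact h t
  have hyk : y k = 0 := by
    rw [← Module.forall_dual_apply_eq_zero_iff ℝ (y k)]
    intro f
    set P : Polynomial ℝ := ∑ j ∈ Finset.range N, Polynomial.monomial j (f (y j)) with hP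
    have hPeval : ∀ t : ℝ, P.eval t = 0 := by
      intro t
      rw [hP, Polynomial.eval_finset_sum]
      simp only [Polynomial.eval_monomial]
      have h2 := congrArg f (hq t)
      rw [map_sum, map_zero] at h2
      simpa [mul_comm] using h2
    have hP0 : P = 0 := Polynomial.funext fun r => by rw [hPeval]; simp
    have hco : P.coeff k = f (y k) := by
      rw [hP, Polynomial.finset_sum_coeff]
      rw [Finset.sum_congr rfl fun j _ => Polynomial.coeff_monomial]
      rw [Finset.sum_ite_eq' (Finset.range N) k fun j => f (y j), if_pos hk]
    rw [hP0] at hco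
    simpa using hco.symm
  exact (Submodule.Quotient.mk_eq_zero W).1 hyk

end Extraction

section Sig
variable {g ℓ : ℕ} {I : Submodule (FreePoly g) (Fin ℓ → FreePoly g)}

lemma sig_monoRow (t : ℝ) (i : Fin ℓ) (w : List (Lttr g)) :
    (fun j => sig g t (monoRow i w j)) = t ^ w.length • monoRow i w := by
  funext j
  simp only [monoRow, Pi.smul_apply]
  split
  · exact sig_fword t w
  · rw [_root_.map_zero, smul_zero]

lemma sig_homogRow {d : ℕ} {v : Fin ℓ → FreePoly g} (hv : v ∈ homogRow g ℓ d) (t : ℝ) :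
    (fun j => sig g t (v j)) = t ^ d • v := by
  induction hv using Submodule.span_induction with
  | mem x hx =>
      obtain ⟨i, w, hw, rfl⟩ := hx
      rw [sig_monoRow, hw]
  | zero => funext j; simp
  | add x y hx hy ihx ihy =>
      funext j
      have hx' := congrFun ihx j
      have hy' := congrFun ihy j
      simp only [Pi.add_apply, Pi.smul_apply] at *
      rw [_root_.map_add, hx', hy', smul_add]
  | smul c x hx ih =>
      funext j
      have hx' := congrFun ih j
      simp only [Pi.smul_apply] at *
      rw [_root_.map_smul, hx', smul_comm]

lemma sig_mem_I (hI : IsHomogeneousMod I) (t : ℝ) {r : Fin ℓ → FreePoly g} (hr : r ∈ I) :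
    (fun j => sig g t (r j)) ∈ I := by
  obtain ⟨S, hS, rfl⟩ := hI
  induction hr using Submodule.span_induction with
  | mem x hx =>
      obtain ⟨d, hd⟩ := hS x hx
      rw [sig_homogRow hd t]
      exact Submodule.smul_of_tower_mem _ _ (Submodule.subset_span hx)
  | zero =>
      have : (fun j => sig g t ((0 : Fin ℓ → FreePoly g) j)) = 0 := by
        funext j; simp
      rw [this]; exact Submodule.zero_mem _
  | add x y hx hy ihx ihy =>
      have : (fun j => sig g t ((x + y) j)) =
          (fun j => sig g t (x j)) + fun j => sig g t (y j) := by
        funext j; simp [_root_.map_add]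
      rw [this]; exact Submodule.add_mem _ ihx ihy
  | smul a x hx ih =>
      have : (fun j => sig g t ((a • x) j)) = sig g t a • fun j => sig g t (x j) := by
        funext j
        show sig g t (a * x j) = sig g t a * sig g t (x j)
        exact _root_.map_mul _ _ _
      rw [this]; exact Submodule.smul_mem _ _ ih

lemma constTerm_fword_nil : constTerm g (fword ([] : List (Lttr g))) = 1 := by
  rw [fword_nil, _root_.map_one]

lemma constTerm_ι (l : Lttr g) : constTerm g (FreeAlgebra.ι ℝ l) = 0 := by
  simp [constTerm]

lemma sig_degLE1 {x : FreePoly g} (hx : x ∈ degLE g 1) (t : ℝ) :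
    sig g t x = algebraMap ℝ (FreePoly g) (constTerm g x)
      + t • (x - algebraMap ℝ (FreePoly g) (constTerm g x)) := by
  induction hx using Submodule.span_induction with
  | mem p hp =>
      obtain ⟨w, hw, rfl⟩ := hp
      match w, hw with
      | [], _ =>
          rw [fword_nil, _root_.map_one, _root_.map_one]
          simp
      | [l], _ =>
          have h1 : fword [l] = FreeAlgebra.ι ℝ l := by
            rw [fword_cons, fword_nil, mul_one]
          rw [h1, sig_ι, constTerm_ι, _root_.map_zero]
          simp
      | (l1 :: l2 :: w'), hw => simp at hw
  | zero => simp
  | add x y hx hy ihx ihy =>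
      rw [_root_.map_add, ihx, ihy, _root_.map_add, _root_.map_add]
      rw [add_sub_add_comm, smul_add]
      abel
  | smul c x hx ih =>
      have hA : ∀ d : ℝ, algebraMap ℝ (FreePoly g) (c • d)
          = c • algebraMap ℝ (FreePoly g) d := fun d => by
        rw [smul_eq_mul, _root_.map_mul, ← Algebra.smul_def]
      rw [_root_.map_smul, ih, _root_.map_smul, hA]
      module

end Sig
section SigM
variable {g : ℕ}

/-- Entrywise scaling of a matrix polynomial. -/
noncomputable def sigM (g : ℕ) (t : ℝ) {a b : ℕ} (A : Matrix (Fin a) (Fin b) (FreePoly g)) :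
    Matrix (Fin a) (Fin b) (FreePoly g) := fun i j => sig g t (A i j)

lemma sigM_add (t : ℝ) {a b : ℕ} (A B : Matrix (Fin a) (Fin b) (FreePoly g)) :
    sigM g t (A + B) = sigM g t A + sigM g t B := by
  funext i j; exact _root_.map_add _ _ _

lemma sigM_sum (t : ℝ) {a b : ℕ} {κ : Type*} (s : Finset κ)
    (f : κ → Matrix (Fin a) (Fin b) (FreePoly g)) :
    sigM g t (∑ k ∈ s, f k) = ∑ k ∈ s, sigM g t (f k) := by
  funext i j
  show sig g t ((∑ k ∈ s, f k) i j) = _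
  rw [Matrix.sum_apply, map_sum, Matrix.sum_apply]
  rfl

lemma sigM_mul (t : ℝ) {a b c : ℕ} (A : Matrix (Fin a) (Fin b) (FreePoly g))
    (B : Matrix (Fin b) (Fin c) (FreePoly g)) :
    sigM g t (A * B) = sigM g t A * sigM g t B := by
  funext i j
  show sig g t ((A * B) i j) = _
  rw [Matrix.mul_apply, map_sum, Matrix.mul_apply]
  exact Finset.sum_congr rfl fun k _ => _root_.map_mul _ _ _

lemma sigM_starM (t : ℝ) {a b : ℕ} (A : Matrix (Fin a) (Fin b) (FreePoly g)) :
    sigM g t (starM A) = starM (sigM g t A) := by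
  funext i j; exact sig_pstar t (A j i)

lemma sigM_sqForm (t : ℝ) {ℓ : ℕ} (r : Fin ℓ → FreePoly g) :
    sigM g t (sqForm r) = sqForm (fun j => sig g t (r j)) := by
  funext u v
  show sig g t (pstar (r u) * r v) = pstar (sig g t (r u)) * sig g t (r v)
  rw [_root_.map_mul, sig_pstar]

lemma outerStar_smul_smul {ℓ : ℕ} (c d : ℝ) (r s : Fin ℓ → FreePoly g) :
    outerStar (c • r) (d • s) = (c * d) • outerStar r s := by
  funext u v
  show pstar (c • r u) * (d • s v) = (c * d) • (pstar (r u) * s v)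
  rw [pstar_smul, smul_mul_smul_comm]

lemma outerStar_sum_left {ℓ : ℕ} {κ : Type*} (s : Finset κ) (f : κ → (Fin ℓ → FreePoly g))
    (y : Fin ℓ → FreePoly g) :
    outerStar (∑ k ∈ s, f k) y = ∑ k ∈ s, outerStar (f k) y := by
  funext u v
  have h1 : (∑ k ∈ s, f k) u = ∑ k ∈ s, f k u := by simp
  show pstar ((∑ k ∈ s, f k) u) * y v = (∑ k ∈ s, outerStar (f k) y) u v
  rw [h1, pstar_sum, Finset.sum_mul]
  simp only [Matrix.sum_apply]
  exact Finset.sum_congr rfl fun k _ => rfl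

lemma outerStar_sum_right {ℓ : ℕ} {κ : Type*} (s : Finset κ) (x : Fin ℓ → FreePoly g)
    (f : κ → (Fin ℓ → FreePoly g)) :
    outerStar x (∑ k ∈ s, f k) = ∑ k ∈ s, outerStar x (f k) := by
  funext u v
  have h1 : (∑ k ∈ s, f k) v = ∑ k ∈ s, f k v := by simp
  show pstar (x u) * ((∑ k ∈ s, f k) v) = (∑ k ∈ s, outerStar x (f k)) u v
  rw [h1, Finset.mul_sum]
  simp only [Matrix.sum_apply]
  exact Finset.sum_congr rfl fun k _ => rfl

lemma outerStar_expand {ℓ N : ℕ} (t : ℝ) (f h : ℕ → (Fin ℓ → FreePoly g)) :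
    outerStar (∑ d ∈ Finset.range N, t ^ d • f d) (∑ e ∈ Finset.range N, t ^ e • h e)
      = ∑ x ∈ Finset.range N ×ˢ Finset.range N,
          t ^ (x.1 + x.2) • outerStar (f x.1) (h x.2) := by
  rw [outerStar_sum_left, Finset.sum_product]
  refine Finset.sum_congr rfl fun d _ => ?_
  rw [outerStar_sum_right]
  refine Finset.sum_congr rfl fun e _ => ?_
  rw [outerStar_smul_smul, pow_add]

lemma matmul_expand {a b c N : ℕ} (t : ℝ) (A : ℕ → Matrix (Fin a) (Fin b) (FreePoly g))
    (B : ℕ → Matrix (Fin b) (Fin c) (FreePoly g)) :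
    (∑ d ∈ Finset.range N, t ^ d • A d) * (∑ e ∈ Finset.range N, t ^ e • B e)
      = ∑ x ∈ Finset.range N ×ˢ Finset.range N, t ^ (x.1 + x.2) • (A x.1 * B x.2) := by
  rw [Matrix.sum_mul, Finset.sum_product]
  refine Finset.sum_congr rfl fun d _ => ?_
  rw [Matrix.mul_sum]
  refine Finset.sum_congr rfl fun e _ => ?_
  rw [Matrix.smul_mul, Matrix.mul_smul, smul_smul, pow_add]

lemma regroup {M : Type*} [AddCommMonoid M] [Module ℝ M] (t : ℝ) (P : Finset (ℕ × ℕ))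
    (gd : ℕ × ℕ → ℕ) {Mx : ℕ} (hg : ∀ x ∈ P, gd x < Mx) (F : ℕ × ℕ → M) :
    ∑ x ∈ P, t ^ (gd x) • F x
      = ∑ k ∈ Finset.range Mx, t ^ k • ∑ x ∈ P.filter (fun x => gd x = k), F x := by
  classical
  have h1 : ∀ k ∈ Finset.range Mx,
      t ^ k • ∑ x ∈ P.filter (fun x => gd x = k), F x
        = ∑ x ∈ P.filter (fun x => gd x = k), t ^ (gd x) • F x := by
    intro k _
    rw [Finset.smul_sum]
    refine Finset.sum_congr rfl fun x hx => ?_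
    rw [(Finset.mem_filter.1 hx).2]
  rw [Finset.sum_congr rfl h1]
  exact (Finset.sum_fiberwise_of_maps_to (fun x hx => Finset.mem_range.2 (hg x hx)) _).symm

end SigM
section Pencil
variable {g ν ℓ : ℕ}

lemma pstar_sub (x y : FreePoly g) : pstar (x - y) = pstar x - pstar y :=
  map_sub (pstarL g) x y

lemma starM_sub {a b : ℕ} (A B : Matrix (Fin a) (Fin b) (FreePoly g)) :
    starM (A - B) = starM A - starM B := by
  funext i j; exact pstar_sub _ _

lemma starM_one : starM (1 : Matrix (Fin ν) (Fin ν) (FreePoly g)) = 1 := by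
  funext i j
  show pstar ((1 : Matrix (Fin ν) (Fin ν) (FreePoly g)) j i) = _
  by_cases h : i = j
  · subst h; simp [Matrix.one_apply, pstar_one]
  · rw [Matrix.one_apply_ne (fun hh => h hh.symm), Matrix.one_apply_ne h, pstar_zero]

lemma sigM_pencil {L : Matrix (Fin ν) (Fin ν) (FreePoly g)} (hL : IsPencil L)
    (hmon : IsMonic L) (t : ℝ) :
    sigM g t L = 1 + t • (L - 1) := by
  funext i j
  show sig g t (L i j) = _
  rw [sig_degLE1 (hL.2 i j) t, hmon i j]
  have h1 : algebraMap ℝ (FreePoly g) (if i = j then (1 : ℝ) else 0)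
      = (1 : Matrix (Fin ν) (Fin ν) (FreePoly g)) i j := by
    rw [Matrix.one_apply]; split <;> simp
  rw [h1]
  have h2 : (1 + t • (L - 1) : Matrix (Fin ν) (Fin ν) (FreePoly g)) i j
      = (1 : Matrix (Fin ν) (Fin ν) (FreePoly g)) i j
        + t • (L i j - (1 : Matrix (Fin ν) (Fin ν) (FreePoly g)) i j) := rfl
  rw [h2]

lemma starM_mul_self_eq (Q : Matrix (Fin ν) (Fin ℓ) (FreePoly g)) :
    starM Q * Q = ∑ k : Fin ν, sqForm (Q k) := by
  funext u v
  rw [Matrix.mul_apply]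
  simp only [Matrix.sum_apply]
  exact Finset.sum_congr rfl fun k _ => rfl

variable {I : Submodule (FreePoly g) (Fin ℓ → FreePoly g)}
  {L : Matrix (Fin ν) (Fin ν) (FreePoly g)}

lemma strong_implies_LReal (h : IsLRealStrong L I) : IsLReal L I := by
  intro a b p q hm
  obtain ⟨h1, h2⟩ := h a b p q hm
  exact ⟨h1, fun j => rowsInM_mul L (h2 j)⟩

lemma LReal_implies_one (hLr : IsLReal L I) :
    IsLReal (1 : Matrix (Fin 1) (Fin 1) (FreePoly g)) I := by
  intro a b p q hm
  have hq1 : ∀ j, quadForm (1 : Matrix (Fin 1) (Fin 1) (FreePoly g)) (q j)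
      = sqForm (q j 0) := by
    intro j
    show starM (q j) * 1 * (q j) = _
    rw [Matrix.mul_one, starM_mul_self_eq]
    rw [Fin.sum_univ_one]
  set P' : Fin (a + b) → (Fin ℓ → FreePoly g) :=
    fun k => Sum.elim p (fun j => q j 0) (finSumFinEquiv.symm k) with hP'
  have hsum : ∑ k, sqForm (P' k)
      = (∑ i, sqForm (p i)) + ∑ j, quadForm (1 : Matrix (Fin 1) (Fin 1) (FreePoly g)) (q j) := by
    rw [hP']
    rw [Equiv.sum_comp finSumFinEquiv.symm (fun z => sqForm (Sum.elim p (fun j => q j 0) z))]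
    rw [Fintype.sum_sum_type]
    refine congrArg _ ?_
    exact Finset.sum_congr rfl fun j _ => (hq1 j).symm
  have happ := hLr (a + b) 0 P' (fun _ => (0 : Matrix (Fin ν) (Fin ℓ) (FreePoly g))) ?_
  · refine ⟨fun i => ?_, fun j => ?_⟩
    · have h3 := happ.1 (finSumFinEquiv (Sum.inl i))
      have h4 : P' (finSumFinEquiv (Sum.inl i)) = p i := by
        show Sum.elim p (fun j => q j 0) (finSumFinEquiv.symm (finSumFinEquiv (Sum.inl i))) = p i
        rw [Equiv.symm_apply_apply]
        rfl
      rwa [h4] at h3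
    · rw [Matrix.one_mul]
      intro k
      have hk : k = 0 := Subsingleton.elim _ _
      subst hk
      have h3 := happ.1 (finSumFinEquiv (Sum.inr j))
      have h4 : P' (finSumFinEquiv (Sum.inr j)) = q j 0 := by
        show Sum.elim p (fun j => q j 0) (finSumFinEquiv.symm (finSumFinEquiv (Sum.inr j))) = q j 0
        rw [Equiv.symm_apply_apply]
        rfl
      rwa [h4] at h3
  · rw [hsum]
    simpa using hm

end Pencil
section Main
variable {g ν ℓ : ℕ} {I : Submodule (FreePoly g) (Fin ℓ → FreePoly g)}
  {L : Matrix (Fin ν) (Fin ν) (FreePoly g)}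

lemma real_implies_strong (hI : IsHomogeneousMod I) (hL : IsPencil L) (hmon : IsMonic L)
    (hreal : IsLReal (1 : Matrix (Fin 1) (Fin 1) (FreePoly g)) I) :
    IsLRealStrong L I := by
  classical
  intro a b p q hmem
  set Λ : Matrix (Fin ν) (Fin ν) (FreePoly g) := L - 1 with hΛdef
  have hΛstar : starM Λ = Λ := by rw [hΛdef, starM_sub, hL.1, starM_one]
  set pc : Fin a → ℕ → (Fin ℓ → FreePoly g) := fun i d j => projP g d (p i j) with hpcdef
  set qc : Fin b → ℕ → Matrix (Fin ν) (Fin ℓ) (FreePoly g) :=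
    fun j d k l => projP g d (q j k l) with hqcdef
  set N : ℕ :=
    (Finset.univ.sup fun x : Fin a × Fin ℓ => projBound (p x.1 x.2)) ⊔
    (Finset.univ.sup fun x : (Fin b × Fin ν) × Fin ℓ => projBound (q x.1.1 x.1.2 x.2))
    with hNdef
  have hpb : ∀ i j d, N ≤ d → projP g d (p i j) = 0 := by
    intro i j d hd
    refine projP_eq_zero (le_trans (le_trans ?_ le_sup_left) hd)
    exact Finset.le_sup (f := fun x : Fin a × Fin ℓ => projBound (p x.1 x.2))
      (Finset.mem_univ (i, j))
  have hqb : ∀ j k l d, N ≤ d → projP g d (q j k l) = 0 := by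
    intro j k l d hd
    refine projP_eq_zero (le_trans (le_trans ?_ le_sup_right) hd)
    exact Finset.le_sup (f := fun x : (Fin b × Fin ν) × Fin ℓ => projBound (q x.1.1 x.1.2 x.2))
      (Finset.mem_univ ((j, k), l))
  clear hNdef
  clear_value N
  have hpz : ∀ i d, N ≤ d → pc i d = 0 := fun i d hd => funext fun j => hpb i j d hd
  have hqz : ∀ j d, N ≤ d → qc j d = 0 := fun j d hd =>
    funext fun k => funext fun l => hqb j k l d hd
  have hp : ∀ (t : ℝ) i, (fun j => sig g t (p i j)) = ∑ d ∈ Finset.range N, t ^ d • pc i d := by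
    intro t i
    funext j
    have h1 : (∑ d ∈ Finset.range N, t ^ d • pc i d) j
        = ∑ d ∈ Finset.range N, t ^ d • pc i d j := by simp
    rw [h1]
    exact sig_eq_sum (fun d hd => hpb i j d hd) t
  have hq : ∀ (t : ℝ) j, sigM g t (q j) = ∑ d ∈ Finset.range N, t ^ d • qc j d := by
    intro t j
    funext k l
    have h1 : (∑ d ∈ Finset.range N, t ^ d • qc j d) k l
        = ∑ d ∈ Finset.range N, t ^ d • qc j d k l := by simp [Matrix.sum_apply]
    show sig g t (q j k l) = _
    rw [h1]
    exact sig_eq_sum (fun d hd => hqb j k l d hd) t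
  set A2 : ℕ → ℕ → Matrix (Fin ℓ) (Fin ℓ) (FreePoly g) := fun u v =>
    (∑ i, outerStar (pc i u) (pc i v)) + ∑ j, starM (qc j u) * qc j v with hA2def
  set B2 : ℕ → ℕ → Matrix (Fin ℓ) (Fin ℓ) (FreePoly g) := fun u v =>
    ∑ j, starM (qc j u) * (Λ * qc j v) with hB2def
  set P2 : Finset (ℕ × ℕ) := Finset.range N ×ˢ Finset.range N with hP2def
  set m : ℕ → Matrix (Fin ℓ) (Fin ℓ) (FreePoly g) := fun k =>
    (∑ x ∈ P2.filter fun x => x.1 + x.2 = k, A2 x.1 x.2)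
      + ∑ x ∈ P2.filter fun x => x.1 + x.2 + 1 = k, B2 x.1 x.2 with hmdef
  have hP2mem : ∀ x : ℕ × ℕ, x ∈ P2 → x.1 < N ∧ x.2 < N := by
    intro x hx
    rw [hP2def, Finset.mem_product, Finset.mem_range, Finset.mem_range] at hx
    exact hx
  -- Step 1: the scaled identity
  have hG : ∀ t : ℝ, ∑ k ∈ Finset.range (2 * N + 1), t ^ k • m k ∈ Wmod I := by
    intro t
    obtain ⟨u, v, hu, hv, hF⟩ := hmem
    have hWm : sigM g t ((∑ i, sqForm (p i)) + ∑ j, quadForm L (q j)) ∈ Wmod I := by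
      rw [hF, sigM_add]
      have h2 : sigM g t (starM v) = starM (sigM g t v) := sigM_starM t v
      rw [h2]
      refine Submodule.add_mem _ (wmem_left fun i => ?_) (wmem_right fun i => ?_)
      · exact sig_mem_I hI t (hu i)
      · exact sig_mem_I hI t (hv i)
    have e1 : ∀ i, sigM g t (sqForm (p i))
        = ∑ x ∈ P2, t ^ (x.1 + x.2) • outerStar (pc i x.1) (pc i x.2) := by
      intro i
      rw [sigM_sqForm, hp t i, hP2def]
      exact outerStar_expand t (pc i) (pc i)
    have e2 : ∀ j, sigM g t (quadForm L (q j))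
        = (∑ x ∈ P2, t ^ (x.1 + x.2) • (starM (qc j x.1) * qc j x.2))
          + ∑ x ∈ P2, t ^ (x.1 + x.2 + 1) • (starM (qc j x.1) * (Λ * qc j x.2)) := by
      intro j
      show sigM g t (starM (q j) * L * q j) = _
      rw [sigM_mul, sigM_mul, sigM_starM, sigM_pencil hL hmon t, hq t j, ← hΛdef]
      have hs : starM (∑ d ∈ Finset.range N, t ^ d • qc j d)
          = ∑ d ∈ Finset.range N, t ^ d • starM (qc j d) := by
        rw [starM_sum]
        exact Finset.sum_congr rfl fun d _ => starM_smul _ _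
      rw [hs, Matrix.mul_add, Matrix.mul_one, Matrix.mul_smul, Matrix.add_mul, Matrix.smul_mul]
      congr 1
      · rw [hP2def]; exact matmul_expand t (fun d => starM (qc j d)) (qc j)
      · have h3 : (∑ d ∈ Finset.range N, t ^ d • starM (qc j d)) * Λ
            = ∑ d ∈ Finset.range N, t ^ d • (starM (qc j d) * Λ) := by
          rw [Matrix.sum_mul]
          exact Finset.sum_congr rfl fun d _ => Matrix.smul_mul _ _ _
        rw [h3, matmul_expand t (fun d => starM (qc j d) * Λ) (qc j), Finset.smul_sum, hP2def]
        refine Finset.sum_congr rfl fun x _ => ?_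
        rw [smul_smul, ← pow_succ', Matrix.mul_assoc]
    have hexp : sigM g t ((∑ i, sqForm (p i)) + ∑ j, quadForm L (q j))
        = ∑ k ∈ Finset.range (2 * N + 1), t ^ k • m k := by
      rw [sigM_add, sigM_sum, sigM_sum]
      rw [Finset.sum_congr rfl fun i _ => e1 i, Finset.sum_congr rfl fun j _ => e2 j]
      rw [Finset.sum_add_distrib]
      have c1 : ∑ i, ∑ x ∈ P2, t ^ (x.1 + x.2) • outerStar (pc i x.1) (pc i x.2)
          = ∑ x ∈ P2, t ^ (x.1 + x.2) • ∑ i, outerStar (pc i x.1) (pc i x.2) := by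
        rw [Finset.sum_comm]
        exact Finset.sum_congr rfl fun x _ => (Finset.smul_sum).symm
      have c2 : ∑ j, ∑ x ∈ P2, t ^ (x.1 + x.2) • (starM (qc j x.1) * qc j x.2)
          = ∑ x ∈ P2, t ^ (x.1 + x.2) • ∑ j, starM (qc j x.1) * qc j x.2 := by
        rw [Finset.sum_comm]
        exact Finset.sum_congr rfl fun x _ => (Finset.smul_sum).symm
      have c3 : ∑ j, ∑ x ∈ P2, t ^ (x.1 + x.2 + 1) • (starM (qc j x.1) * (Λ * qc j x.2))
          = ∑ x ∈ P2, t ^ (x.1 + x.2 + 1) • B2 x.1 x.2 := by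
        rw [Finset.sum_comm]
        exact Finset.sum_congr rfl fun x _ => (Finset.smul_sum).symm
      rw [c1, c2, c3, ← add_assoc, ← Finset.sum_add_distrib]
      have c4 : ∀ x ∈ P2, t ^ (x.1 + x.2) • ∑ i, outerStar (pc i x.1) (pc i x.2)
          + t ^ (x.1 + x.2) • ∑ j, starM (qc j x.1) * qc j x.2
          = t ^ (x.1 + x.2) • A2 x.1 x.2 := by
        intro x _
        rw [hA2def, smul_add]
      rw [Finset.sum_congr rfl c4]
      have r1 := regroup (Mx := 2 * N + 1) t P2 (fun x => x.1 + x.2)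
        (fun x hx => by have h := hP2mem x hx; show x.1 + x.2 < 2 * N + 1; omega)
        (fun x => A2 x.1 x.2)
      have r2 := regroup (Mx := 2 * N + 1) t P2 (fun x => x.1 + x.2 + 1)
        (fun x hx => by have h := hP2mem x hx; show x.1 + x.2 + 1 < 2 * N + 1; omega)
        (fun x => B2 x.1 x.2)
      rw [r1, r2, ← Finset.sum_add_distrib]
      refine Finset.sum_congr rfl fun k _ => ?_
      rw [hmdef, smul_add]
    rw [← hexp]
    exact hWm
  have hcoef : ∀ k ∈ Finset.range (2 * N + 1), m k ∈ Wmod I :=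
    coeff_mem (Wmod I) (2 * N + 1) m hG
  -- Step 2: induction on degree
  have hstep : ∀ s : ℕ, (∀ i d, d < s → pc i d ∈ I) → (∀ j d, d < s → rowsInM I (qc j d)) →
      (∀ i, pc i s ∈ I) ∧ ∀ j, rowsInM I (qc j s) := by
    intro s ih1 ih2
    by_cases hsN : s < N
    · -- isolate the degree-2s coefficient
      have h2s : m (2 * s) ∈ Wmod I := hcoef (2 * s) (Finset.mem_range.2 (by omega))
      have hss : (s, s) ∈ P2.filter fun x => x.1 + x.2 = 2 * s := by
        simp only [Finset.mem_filter, hP2def, Finset.mem_product, Finset.mem_range]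
        exact ⟨⟨hsN, hsN⟩, by omega⟩
      have hsplit : ∑ x ∈ P2.filter (fun x => x.1 + x.2 = 2 * s), A2 x.1 x.2
          = A2 s s + ∑ x ∈ (P2.filter fun x => x.1 + x.2 = 2 * s).erase (s, s), A2 x.1 x.2 :=
        (Finset.add_sum_erase _ _ hss).symm
      have hAW : ∀ x ∈ (P2.filter fun x => x.1 + x.2 = 2 * s).erase (s, s),
          A2 x.1 x.2 ∈ Wmod I := by
        intro x hx
        have hxe := Finset.mem_of_mem_erase hx
        have hxne := Finset.ne_of_mem_erase hx
        rw [Finset.mem_filter] at hxe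
        have hxsum : x.1 + x.2 = 2 * s := hxe.2
        have hcase : x.1 < s ∨ x.2 < s := by
          by_contra hcon
          push_neg at hcon
          have : x.1 = s ∧ x.2 = s := by omega
          exact hxne (Prod.ext this.1 this.2)
        rcases hcase with hlt | hlt
        · -- left component lower degree : use star
          have hrows : rowsInM I (A2 x.2 x.1) := by
            rw [hA2def]
            refine rowsInM_add (rowsInM_sum _ fun i _ => ?_) (rowsInM_sum _ fun j _ => ?_)
            · exact rowsInM_outerStar (ih1 i x.1 hlt)
            · exact rowsInM_mul _ (ih2 j x.1 hlt)
          have hstarA : starM (A2 x.2 x.1) = A2 x.1 x.2 := by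
            rw [hA2def, starM_add, starM_sum, starM_sum]
            congr 1
            · exact Finset.sum_congr rfl fun i _ => starM_outerStar _ _
            · refine Finset.sum_congr rfl fun j _ => ?_
              rw [starM_mul, starM_starM]
          rw [← hstarA]
          exact wmem_right hrows
        · refine wmem_left ?_
          rw [hA2def]
          refine rowsInM_add (rowsInM_sum _ fun i _ => ?_) (rowsInM_sum _ fun j _ => ?_)
          · exact rowsInM_outerStar (ih1 i x.2 hlt)
          · exact rowsInM_mul _ (ih2 j x.2 hlt)
      have hBW : ∀ x ∈ P2.filter (fun x => x.1 + x.2 + 1 = 2 * s),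
          B2 x.1 x.2 ∈ Wmod I := by
        intro x hx
        rw [Finset.mem_filter] at hx
        have hxsum : x.1 + x.2 + 1 = 2 * s := hx.2
        have hcase : x.1 < s ∨ x.2 < s := by omega
        rcases hcase with hlt | hlt
        · have hrows : rowsInM I (∑ j, starM (qc j x.2) * (Λ * qc j x.1)) := by
            refine rowsInM_sum _ fun j _ => ?_
            exact rowsInM_mul _ (rowsInM_mul _ (ih2 j x.1 hlt))
          have hstarB : starM (∑ j, starM (qc j x.2) * (Λ * qc j x.1)) = B2 x.1 x.2 := by
            rw [starM_sum, hB2def]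
            refine Finset.sum_congr rfl fun j _ => ?_
            rw [starM_mul, starM_starM, starM_mul, hΛstar, Matrix.mul_assoc]
          rw [← hstarB]
          exact wmem_right hrows
        · refine wmem_left ?_
          rw [hB2def]
          refine rowsInM_sum _ fun j _ => ?_
          exact rowsInM_mul _ (rowsInM_mul _ (ih2 j x.2 hlt))
      have hT : A2 s s ∈ Wmod I := by
        have hrest : (∑ x ∈ (P2.filter fun x => x.1 + x.2 = 2 * s).erase (s, s), A2 x.1 x.2)
            + ∑ x ∈ P2.filter (fun x => x.1 + x.2 + 1 = 2 * s), B2 x.1 x.2 ∈ Wmod I :=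
          Submodule.add_mem _ (Submodule.sum_mem _ hAW) (Submodule.sum_mem _ hBW)
        have hmm : m (2 * s) = A2 s s
            + ((∑ x ∈ (P2.filter fun x => x.1 + x.2 = 2 * s).erase (s, s), A2 x.1 x.2)
              + ∑ x ∈ P2.filter (fun x => x.1 + x.2 + 1 = 2 * s), B2 x.1 x.2) := by
          rw [hmdef]
          show (∑ x ∈ P2.filter fun x => x.1 + x.2 = 2 * s, A2 x.1 x.2) + _ = _
          rw [hsplit, add_assoc]
        have := Submodule.sub_mem _ h2s hrest
        rw [hmm] at this
        simpa using this
      -- apply realness of I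
      let e : (Fin a ⊕ Fin b × Fin ν) ≃ Fin (a + b * ν) :=
        (Equiv.sumCongr (Equiv.refl (Fin a)) finProdFinEquiv).trans finSumFinEquiv
      let G : Fin a ⊕ Fin b × Fin ν → (Fin ℓ → FreePoly g) :=
        Sum.elim (fun i => pc i s) (fun z => qc z.1 s z.2)
      have hsum2 : ∑ k : Fin (a + b * ν), sqForm (G (e.symm k)) = A2 s s := by
        rw [Equiv.sum_comp e.symm (fun z => sqForm (G z)), Fintype.sum_sum_type]
        rw [hA2def]
        congr 1
        rw [Fintype.sum_prod_type]
        refine Finset.sum_congr rfl fun j _ => ?_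
        rw [starM_mul_self_eq]
        rfl
      have happ := hreal (a + b * ν) 0 (fun k => G (e.symm k))
        (fun _ => (0 : Matrix (Fin 1) (Fin ℓ) (FreePoly g))) ?_
      · constructor
        · intro i
          have h3 := happ.1 (e (Sum.inl i))
          rw [Equiv.symm_apply_apply] at h3
          exact h3
        · intro j k
          have h3 := happ.1 (e (Sum.inr (j, k)))
          rw [Equiv.symm_apply_apply] at h3
          exact h3
      · rw [hsum2]
        have h0 : ∑ j : Fin 0, quadForm (1 : Matrix (Fin 1) (Fin 1) (FreePoly g))
            ((fun _ => (0 : Matrix (Fin 1) (Fin ℓ) (FreePoly g))) j) = 0 := by simp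
        rw [h0, add_zero]
        exact hT
    · push_neg at hsN
      constructor
      · intro i; rw [hpz i s hsN]; exact Submodule.zero_mem I
      · intro j; rw [hqz j s hsN]; exact rowsInM_zero
  have hkey : ∀ s : ℕ, (∀ i d, d < s → pc i d ∈ I) ∧ ∀ j d, d < s → rowsInM I (qc j d) := by
    intro s
    induction s with
    | zero => exact ⟨fun i d hd => absurd hd (Nat.not_lt_zero d),
        fun j d hd => absurd hd (Nat.not_lt_zero d)⟩
    | succ s ih =>
        obtain ⟨ih1, ih2⟩ := ih
        obtain ⟨h1, h2⟩ := hstep s ih1 ih2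
        constructor
        · intro i d hd
          rcases Nat.lt_succ_iff_lt_or_eq.1 hd with h | h
          · exact ih1 i d h
          · subst h; exact h1 i
        · intro j d hd
          rcases Nat.lt_succ_iff_lt_or_eq.1 hd with h | h
          · exact ih2 j d h
          · subst h; exact h2 j
  constructor
  · intro i
    have hrepr : p i = ∑ d ∈ Finset.range N, pc i d := by
      funext j
      have h1 : (∑ d ∈ Finset.range N, pc i d) j = ∑ d ∈ Finset.range N, pc i d j := by simp
      rw [h1]
      exact (sum_projP (fun d hd => hpb i j d hd)).symm
    rw [hrepr]
    exact Submodule.sum_mem _ fun d _ => (hkey (d + 1)).1 i d (Nat.lt_succ_self d)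
  · intro j k
    have hrepr : q j k = ∑ d ∈ Finset.range N, qc j d k := by
      funext l
      have h1 : (∑ d ∈ Finset.range N, qc j d k) l = ∑ d ∈ Finset.range N, qc j d k l := by simp
      rw [h1]
      exact (sum_projP (fun d hd => hqb j k l d hd)).symm
    rw [hrepr]
    exact Submodule.sum_mem _ fun d _ => (hkey (d + 1)).2 j d (Nat.lt_succ_self d) k

end Main
/-- **For a homogeneous left module and a monic pencil, real, `L`-real and strongly
`L`-real coincide.** -/
theorem homogeneous_real_iff_LReal (g ν ℓ : ℕ) (hg : 0 < g)
    (I : Submodule (FreePoly g) (Fin ℓ → FreePoly g)) (hI : IsHomogeneousMod I)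
    (L : Matrix (Fin ν) (Fin ν) (FreePoly g)) (hL : IsPencil L) (hLmonic : IsMonic L) :
    (IsLReal (1 : Matrix (Fin 1) (Fin 1) (FreePoly g)) I ↔ IsLReal L I) ∧
    (IsLReal L I ↔ IsLRealStrong L I) := by
  have h1 : IsLReal (1 : Matrix (Fin 1) (Fin 1) (FreePoly g)) I → IsLRealStrong L I :=
    fun h => real_implies_strong hI hL hLmonic h
  have h2 : IsLRealStrong L I → IsLReal L I := strong_implies_LReal
  have h3 : IsLReal L I → IsLReal (1 : Matrix (Fin 1) (Fin 1) (FreePoly g)) I :=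
    LReal_implies_one
  exact ⟨⟨fun h => h2 (h1 h), h3⟩, ⟨fun h => h1 (h3 h), h2⟩⟩
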